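/- For every permutation σ in the symmetric group S_α, if τ = (1 2 ⋯ α) is the full cycle, then ξ(στ) + ξ(σ) ≤ α + 1, where ξ(π) denotes the number of disjoint cycles of π (including fixed points). -/

import Mathlib

/-- Number of disjoint cycles of a permutation, counting fixed points. -/
def cycleCount {n : ℕ} (σ : Equiv.Perm (Fin n)) : ℕ :=
  σ.cycleType.card + (n - σ.support.card)

open Equiv Equiv.Perm Module

variable {α : ℕ}

/-- The linear endomorphism `v ↦ v ∘ π - v` of `Fin α → ℚ`. -/
noncomputable def Lp (π : Equiv.Perm (Fin α)) : (Fin α → ℚ) →ₗ[ℚ] (Fin α → ℚ) :=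
  LinearMap.funLeft ℚ ℚ π - LinearMap.id

/-- Dimension of the fixed space of `π`. -/
noncomputable def Kdim (π : Equiv.Perm (Fin α)) : ℕ := finrank ℚ (LinearMap.ker (Lp π))

/-- Rank of `Lp π`. -/
noncomputable def Rdim (π : Equiv.Perm (Fin α)) : ℕ := finrank ℚ (LinearMap.range (Lp π))

lemma Lp_apply (π : Equiv.Perm (Fin α)) (v : Fin α → ℚ) (i : Fin α) :
    Lp π v i = v (π i) - v i := rfl

lemma mem_ker_Lp {π : Equiv.Perm (Fin α)} {v : Fin α → ℚ} :
    v ∈ LinearMap.ker (Lp π) ↔ ∀ i, v (π i) = v i := by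
  constructor
  · intro h i
    have := congrFun (LinearMap.mem_ker.mp h) i
    simpa [Lp_apply, sub_eq_zero] using this
  · intro h
    ext i
    simp [Lp_apply, h i]

lemma rank_nullity (π : Equiv.Perm (Fin α)) : Rdim π + Kdim π = α := by
  have := LinearMap.finrank_range_add_finrank_ker (Lp π)
  rwa [Module.finrank_fintype_fun_eq_card, Fintype.card_fin] at this

lemma rank_mul_le (a b : Equiv.Perm (Fin α)) : Rdim (a * b) ≤ Rdim a + Rdim b := by
  have hdecomp : Lp (a * b) = (LinearMap.funLeft ℚ ℚ b).comp (Lp a) + Lp b := by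
    ext v i
    simp [Lp_apply, LinearMap.funLeft_apply, Equiv.Perm.mul_apply]
  have h1 : LinearMap.range (Lp (a * b)) ≤
      LinearMap.range ((LinearMap.funLeft ℚ ℚ b).comp (Lp a)) ⊔ LinearMap.range (Lp b) := by
    rw [hdecomp]
    rintro x ⟨v, rfl⟩
    exact Submodule.add_mem_sup ⟨v, rfl⟩ ⟨v, rfl⟩
  have h2 : finrank ℚ (LinearMap.range ((LinearMap.funLeft ℚ ℚ b).comp (Lp a)))
      ≤ finrank ℚ (LinearMap.range (Lp a)) := by
    rw [LinearMap.range_comp]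
    exact Submodule.finrank_map_le _ _
  calc Rdim (a * b) ≤ finrank ℚ
        ↥(LinearMap.range ((LinearMap.funLeft ℚ ℚ b).comp (Lp a)) ⊔ LinearMap.range (Lp b)) :=
        Submodule.finrank_mono h1
    _ ≤ _ := Submodule.finrank_add_le_finrank_add_finrank _ _
    _ ≤ Rdim a + Rdim b := by exact Nat.add_le_add_right h2 _

open Fin.NatCast in
lemma Kdim_finRotate (hα : 1 ≤ α) : Kdim (finRotate α) ≤ 1 := by
  obtain ⟨m, rfl⟩ : ∃ m, α = m + 1 := ⟨α - 1, (Nat.succ_pred_eq_of_pos hα).symm⟩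
  have hone : (fun _ => (1 : ℚ) : Fin (m + 1) → ℚ) ≠ 0 := by
    intro h
    exact one_ne_zero (congrFun h 0)
  have hle : LinearMap.ker (Lp (finRotate (m + 1))) ≤
      Submodule.span ℚ {(fun _ => (1 : ℚ) : Fin (m + 1) → ℚ)} := by
    intro v hv
    have hstep := mem_ker_Lp.mp hv
    have hnat : ∀ k : ℕ, v (k : Fin (m + 1)) = v 0 := by
      intro k
      induction k with
      | zero => simp
      | succ k ih =>
        have : ((k + 1 : ℕ) : Fin (m + 1)) = (k : Fin (m + 1)) + 1 := by
          push_cast; ring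
        rw [this, ← ih]
        have := hstep (k : Fin (m + 1))
        rwa [finRotate_succ_apply] at this
    have hv' : v = (v 0) • (fun _ => (1 : ℚ)) := by
      ext i
      have := hnat i.val
      rw [Fin.cast_val_eq_self] at this
      simpa using this
    rw [hv']
    exact Submodule.smul_mem _ _ (Submodule.mem_span_singleton_self _)
  calc Kdim (finRotate (m + 1))
      ≤ finrank ℚ (Submodule.span ℚ {(fun _ => (1 : ℚ) : Fin (m + 1) → ℚ)}) :=
        Submodule.finrank_mono hle
    _ = 1 := finrank_span_singleton hone

lemma Kdim_inv_le (σ : Equiv.Perm (Fin α)) : Kdim σ ≤ Kdim σ⁻¹ := by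
  apply Submodule.finrank_mono
  intro v hv
  rw [mem_ker_Lp] at hv ⊢
  intro i
  have := hv (σ⁻¹ i)
  rw [show σ (σ⁻¹ i) = i from σ.apply_symm_apply i] at this
  rw [this]

lemma cycleCount_le_Kdim (π : Equiv.Perm (Fin α)) : cycleCount π ≤ Kdim π := by
  classical
  set I := (↥π.cycleFactorsFinset) ⊕ (↥(π.supportᶜ)) with hI
  -- blocks: the supports of the cycle factors, and the singletons of fixed points
  set block : I → Finset (Fin α) :=
    Sum.elim (fun c => (c : Equiv.Perm (Fin α)).support) (fun x => {(x : Fin α)}) with hblock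
  -- block invariance under π
  have hinv : ∀ (i : I) (j : Fin α), π j ∈ block i ↔ j ∈ block i := by
    rintro (⟨c, hc⟩ | ⟨x, hx⟩) j
    · simp only [hblock, Sum.elim_inl]
      constructor
      · intro h
        have hc' : c = π.cycleOf (π j) := cycle_is_cycleOf h hc
        rw [cycleOf_self_apply] at hc'
        rw [hc', mem_support_cycleOf_iff]
        refine ⟨SameCycle.refl _ _, ?_⟩
        have hπj : π j ∈ π.support := mem_cycleFactorsFinset_support_le hc h
        exact apply_mem_support.mp hπj
      · intro h
        have hc' : c = π.cycleOf j := cycle_is_cycleOf h hc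
        rw [hc', mem_support_cycleOf_iff]
        exact ⟨⟨1, rfl⟩, mem_cycleFactorsFinset_support_le hc h⟩
    · simp only [hblock, Sum.elim_inr, Finset.mem_singleton]
      have hfix : π x = x := notMem_support.mp (Finset.mem_compl.mp hx)
      constructor
      · intro h
        have : π j = π x := by rw [h, hfix]
        exact π.injective this
      · intro h
        rw [h, hfix]
  -- blocks are pairwise disjoint
  have hdisj : ∀ (i i' : I) (a : Fin α), a ∈ block i → a ∈ block i' → i = i' := by
    rintro (⟨c, hc⟩ | ⟨x, hx⟩) (⟨c', hc'⟩ | ⟨x', hx'⟩) a ha ha' <;>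
      simp only [hblock, Sum.elim_inl, Sum.elim_inr, Finset.mem_singleton] at ha ha'
    · have h1 : c = π.cycleOf a := cycle_is_cycleOf ha hc
      have h2 : c' = π.cycleOf a := cycle_is_cycleOf ha' hc'
      congr 1
      exact Subtype.ext (h1.trans h2.symm)
    · exact absurd (mem_cycleFactorsFinset_support_le hc ha)
        (by rw [ha']; exact Finset.mem_compl.mp hx')
    · exact absurd (mem_cycleFactorsFinset_support_le hc' ha')
        (by rw [ha]; exact Finset.mem_compl.mp hx)
    · congr 1
      exact Subtype.ext (ha.symm.trans ha')
  -- every block is nonempty: choose representatives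
  have hrep : ∀ i : I, ∃ a, a ∈ block i := by
    rintro (⟨c, hc⟩ | ⟨x, hx⟩)
    · have : 2 ≤ c.support.card := (mem_cycleFactorsFinset_iff.mp hc).1.two_le_card_support
      obtain ⟨a, ha⟩ := Finset.card_pos.mp (lt_of_lt_of_le (by norm_num) this)
      exact ⟨a, ha⟩
    · exact ⟨x, Finset.mem_singleton_self _⟩
  choose rep hrepmem using hrep
  -- the indicator vectors of the blocks
  set w : I → (Fin α → ℚ) := fun i j => if j ∈ block i then 1 else 0 with hw
  have hwmem : ∀ i, w i ∈ LinearMap.ker (Lp π) := by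
    intro i
    rw [mem_ker_Lp]
    intro j
    simp only [hw]
    exact if_congr (hinv i j) rfl rfl
  set E : (Fin α → ℚ) →ₗ[ℚ] (I → ℚ) := LinearMap.funLeft ℚ ℚ rep with hE
  have hEw : ∀ i, E (w i) = Pi.single i 1 := by
    intro i
    ext j
    simp only [hE, LinearMap.funLeft_apply, hw]
    rcases eq_or_ne j i with rfl | hne
    · simp [hrepmem j]
    · rw [if_neg, Pi.single_eq_of_ne hne]
      intro hmem
      exact hne (hdisj j i _ (hrepmem j) hmem)
  set u : I → LinearMap.ker (Lp π) := fun i => ⟨w i, hwmem i⟩ with hu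
  have hli : LinearIndependent ℚ u := by
    apply LinearIndependent.of_comp (E ∘ₗ (LinearMap.ker (Lp π)).subtype)
    have : (⇑(E ∘ₗ (LinearMap.ker (Lp π)).subtype) ∘ u) = fun i => Pi.single i (1 : ℚ) := by
      funext i
      simp only [Function.comp_apply, LinearMap.comp_apply, Submodule.subtype_apply, hu]
      exact hEw i
    rw [this]
    have := (Pi.basisFun ℚ I).linearIndependent
    convert this using 1
    funext i
    rw [Pi.basisFun_apply]
  have hcard := hli.fintype_card_le_finrank
  have hcardI : Fintype.card ({x // x ∈ π.cycleFactorsFinset} ⊕ {x // x ∈ π.supportᶜ})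
      = cycleCount π := by
    rw [Fintype.card_sum, Fintype.card_coe, Fintype.card_coe,
      Finset.card_compl, Fintype.card_fin]
    have : π.cycleType.card = π.cycleFactorsFinset.card := by
      rw [cycleType_def, Multiset.card_map]
      rfl
    rw [cycleCount, this]
  exact le_trans hcardI.symm.le hcard

theorem cycle_lemma (α : ℕ) (hα : 1 ≤ α) (σ : Equiv.Perm (Fin α)) :
    cycleCount (σ * finRotate α) + cycleCount σ ≤ α + 1 := by
  have h1 := cycleCount_le_Kdim (σ * finRotate α)
  have h2 := cycleCount_le_Kdim σ
  have h3 := Kdim_inv_le σ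
  have hsub := rank_mul_le σ⁻¹ (σ * finRotate α)
  rw [inv_mul_cancel_left] at hsub
  have e1 := rank_nullity (σ * finRotate α)
  have e2 := rank_nullity σ⁻¹
  have e3 := rank_nullity (finRotate α)
  have e4 := Kdim_finRotate hα
  omega
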